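/- The 3-dimensional algebra P with basis e₁, e₂, e₃ and products e_i·e_i = 0, e₁·e₂ = -e₂·e₁ = e₂, e₁·e₃ = -e₃·e₁ = -e₃, e₂·e₃ = -e₃·e₂ = e₁ (all other products zero) is an admissible Poisson algebra in which every element is nilpotent, but P·P = P, so P is a nilalgebra that is not nilpotent. -/
import Mathlib


variable {K : Type*} [Field K] {P : Type*} [AddCommGroup P] [Module K P]

/-- The associator of a bilinear multiplication. -/
def assocOf (m : P →ₗ[K] P →ₗ[K] P) (X Y Z : P) : P := m (m X Y) Z - m X (m Y Z)

/-- Admissible Poisson algebra condition: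
`3 A(X,Y,Z) = (X·Z)·Y + (Y·Z)·X - (Y·X)·Z - (Z·X)·Y`. -/
def IsAdmissible (m : P →ₗ[K] P →ₗ[K] P) : Prop :=
  ∀ X Y Z : P, (3 : ℤ) • assocOf m X Y Z =
    m (m X Z) Y + m (m Y Z) X - m (m Y X) Z - m (m Z X) Y

/-- The antisymmetrized bracket `{X,Y} = (X·Y - Y·X)/2`. -/
def brOf (m : P →ₗ[K] P →ₗ[K] P) (X Y : P) : P := (2 : K)⁻¹ • (m X Y - m Y X)

/-- The symmetrized product `X∙Y = (X·Y + Y·X)/2`. -/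
def bulOf (m : P →ₗ[K] P →ₗ[K] P) (X Y : P) : P := (2 : K)⁻¹ • (m X Y + m Y X)

/-- Powers: `pw m X n = X^(n+1)`, i.e. `X^1 = X`, `X^(i+1) = X · X^i`. -/
def pw (m : P →ₗ[K] P →ₗ[K] P) (X : P) : ℕ → P
  | 0 => X
  | n + 1 => m X (pw m X n)

/-- The multiplication of the 3-dimensional example: on coordinates
`x = (x₀,x₁,x₂)`, `m x y = (x₁y₂ - x₂y₁, x₀y₁ - y₀x₁, -(x₀y₂ - y₀x₂))`,
so that `e₁·e₂ = e₂`, `e₁·e₃ = -e₃`, `e₂·e₃ = e₁` (anti-commutative). -/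
noncomputable def m12 : (Fin 3 → ℂ) →ₗ[ℂ] (Fin 3 → ℂ) →ₗ[ℂ] (Fin 3 → ℂ) :=
  LinearMap.mk₂ ℂ
    (fun x y => ![x 1 * y 2 - x 2 * y 1, x 0 * y 1 - y 0 * x 1, -(x 0 * y 2 - y 0 * x 2)])
    (by intro x x' y; funext i; fin_cases i <;> simp <;> ring)
    (by intro c x y; funext i; fin_cases i <;> simp <;> ring)
    (by intro x y y'; funext i; fin_cases i <;> simp <;> ring)
    (by intro c x y; funext i; fin_cases i <;> simp <;> ring)

/-- the 3-dimensional algebra with basis `e₁,e₂,e₃` and products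
`e₁·e₂ = -e₂·e₁ = e₂`, `e₁·e₃ = -e₃·e₁ = -e₃`, `e₂·e₃ = -e₃·e₂ = e₁`,
`eᵢ·eᵢ = 0`, is an admissible Poisson algebra, every element is nilpotent,
yet `P·P = P`: it is a nilalgebra which is not nilpotent. -/
theorem stmt12 :
    (m12 ![1,0,0] ![0,1,0] = ![0,1,0] ∧ m12 ![0,1,0] ![1,0,0] = -![0,1,0] ∧
     m12 ![1,0,0] ![0,0,1] = -![0,0,1] ∧ m12 ![0,0,1] ![1,0,0] = ![0,0,1] ∧
     m12 ![0,1,0] ![0,0,1] = ![1,0,0] ∧ m12 ![0,0,1] ![0,1,0] = -![1,0,0] ∧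
     (∀ x : Fin 3 → ℂ, m12 x x = 0)) ∧
    IsAdmissible m12 ∧
    (∀ x : Fin 3 → ℂ, ∃ r : ℕ, pw m12 x r = 0) ∧
    Submodule.span ℂ {z : Fin 3 → ℂ | ∃ x y : Fin 3 → ℂ, z = m12 x y} = ⊤ := by
  have hself : ∀ x : Fin 3 → ℂ, m12 x x = 0 := by
    intro x; funext i; fin_cases i <;> simp [m12] <;> ring
  refine ⟨⟨?_, ?_, ?_, ?_, ?_, ?_, hself⟩, ?_, ?_, ?_⟩
  · funext i; fin_cases i <;> simp [m12]
  · funext i; fin_cases i <;> simp [m12]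
  · funext i; fin_cases i <;> simp [m12]
  · funext i; fin_cases i <;> simp [m12]
  · funext i; fin_cases i <;> simp [m12]
  · funext i; fin_cases i <;> simp [m12]
  · intro X Y Z
    funext i; fin_cases i <;> simp [m12, assocOf] <;> ring
  · intro x; exact ⟨1, hself x⟩
  · rw [eq_top_iff]
    have h1 : (![1,0,0] : Fin 3 → ℂ) ∈ {z : Fin 3 → ℂ | ∃ x y, z = m12 x y} :=
      ⟨![0,1,0], ![0,0,1], by funext i; fin_cases i <;> simp [m12]⟩
    have h2 : (![0,1,0] : Fin 3 → ℂ) ∈ {z : Fin 3 → ℂ | ∃ x y, z = m12 x y} :=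
      ⟨![1,0,0], ![0,1,0], by funext i; fin_cases i <;> simp [m12]⟩
    have h3 : (![0,0,1] : Fin 3 → ℂ) ∈ {z : Fin 3 → ℂ | ∃ x y, z = m12 x y} :=
      ⟨![0,0,1], ![1,0,0], by funext i; fin_cases i <;> simp [m12]⟩
    intro v _
    have hv : v = v 0 • ![1,0,0] + v 1 • ![0,1,0] + v 2 • ![0,0,1] := by
      funext i; fin_cases i <;> simp
    rw [hv]
    exact add_mem (add_mem (Submodule.smul_mem _ _ (Submodule.subset_span h1))
      (Submodule.smul_mem _ _ (Submodule.subset_span h2)))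
      (Submodule.smul_mem _ _ (Submodule.subset_span h3))
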